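/- (Alinhac good-unknown cancellation) Let φ be smooth on the slab with ∂_d(x_d + φ) = J ≠ 0, set K = 1/J, and define the 𝒜-derivatives ∂_i^𝒜 f = ∂_i f − K ∂_i φ ∂_d f for i < d and ∂_d^𝒜 f = K ∂_d f. Then for any multi-index α of horizontal derivatives, ∂^α(∂_i^𝒜 f) = ∂_i^𝒜(∂^α f − (∂_d^𝒜 f) ∂^α φ) + (∂_d^𝒜 ∂_i^𝒜 f) ∂^α φ + 𝒞_i^α(f), where the commutator 𝒞_i^α(f) contains only derivatives of φ of order strictly less than |α| + 1 (i.e., the highest-order derivative ∂^α φ appears only in the displayed terms). -/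

import Mathlib

/-- The partial derivative `∂_i f` on `ℝ^{d+1}`. -/
noncomputable def pd {d : ℕ} (i : Fin (d + 1)) (f : EuclideanSpace ℝ (Fin (d + 1)) → ℝ)
    (x : EuclideanSpace ℝ (Fin (d + 1))) : ℝ :=
  fderiv ℝ f x (EuclideanSpace.single i 1)

/-- The `𝒜`-derivatives associated with the flattening map: for horizontal `i`
(`i ≠ last`), `∂_i^𝒜 f = ∂_i f - K ∂_i φ ∂_d f`, and `∂_d^𝒜 f = K ∂_d f`, where
`K = (1 + ∂_d φ)⁻¹` and the last coordinate is the vertical one. -/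
noncomputable def pdA {d : ℕ} (φ : EuclideanSpace ℝ (Fin (d + 1)) → ℝ)
    (i : Fin (d + 1)) (f : EuclideanSpace ℝ (Fin (d + 1)) → ℝ)
    (x : EuclideanSpace ℝ (Fin (d + 1))) : ℝ :=
  if i = Fin.last d then (1 + pd (Fin.last d) φ x)⁻¹ * pd (Fin.last d) f x
  else pd i f x - pd i φ x * ((1 + pd (Fin.last d) φ x)⁻¹ * pd (Fin.last d) f x)

section Aux

variable {d : ℕ} {u v : EuclideanSpace ℝ (Fin (d + 1)) → ℝ}
  {x : EuclideanSpace ℝ (Fin (d + 1))} {j k : Fin (d + 1)}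

lemma pd_sub (hu : DifferentiableAt ℝ u x) (hv : DifferentiableAt ℝ v x) :
    pd j (fun y => u y - v y) x = pd j u x - pd j v x := by
  simp [pd, fderiv_fun_sub hu hv]

lemma pd_mul (hu : DifferentiableAt ℝ u x) (hv : DifferentiableAt ℝ v x) :
    pd j (fun y => u y * v y) x = pd j u x * v x + u x * pd j v x := by
  simp [pd, fderiv_fun_mul hu hv]
  ring

lemma pd_const_add (c : ℝ) (hu : DifferentiableAt ℝ u x) :
    pd j (fun y => c + u y) x = pd j u x := by
  simp [pd, fderiv_const_add]

lemma pd_inv (hu : DifferentiableAt ℝ u x) (hux : u x ≠ 0) :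
    pd j (fun y => (u y)⁻¹) x = -((u x) ^ 2)⁻¹ * pd j u x := by
  have : fderiv ℝ (fun y => (u y)⁻¹) x
      = (fderiv ℝ (fun t : ℝ => t⁻¹) (u x)).comp (fderiv ℝ u x) :=
    fderiv_comp x (differentiableAt_inv hux) hu
  simp [pd, this, fderiv_inv]
  ring

lemma differentiable_pd (hu : ContDiff ℝ 2 u) (k : Fin (d + 1)) :
    Differentiable ℝ (pd k u) := by
  have h1 : ContDiff ℝ 1 (fderiv ℝ u) := hu.fderiv_right (by norm_num)
  exact (h1.differentiable one_ne_zero).clm_apply (differentiable_const _)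

lemma pd_comm (hu : ContDiff ℝ 2 u) (j k : Fin (d + 1))
    (x : EuclideanSpace ℝ (Fin (d + 1))) :
    pd j (pd k u) x = pd k (pd j u) x := by
  have h1 : ContDiff ℝ 1 (fderiv ℝ u) := hu.fderiv_right (by norm_num)
  have hsymm : IsSymmSndFDerivAt ℝ u x :=
    (hu.contDiffAt).isSymmSndFDerivAt (by norm_num)
  have key : ∀ m n : Fin (d + 1), pd m (pd n u) x
      = fderiv ℝ (fderiv ℝ u) x (EuclideanSpace.single m 1) (EuclideanSpace.single n 1) := by
    intro m n
    have : pd n u = fun y => (fderiv ℝ u y) (EuclideanSpace.single n 1) := rfl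
    rw [show pd m (pd n u) x = fderiv ℝ (fun y => (fderiv ℝ u y) (EuclideanSpace.single n 1)) x
        (EuclideanSpace.single m 1) from rfl,
      fderiv_clm_apply ((h1.differentiable one_ne_zero) x) (differentiableAt_const _)]
    simp
  rw [key, key]
  exact hsymm _ _

end Aux

set_option maxHeartbeats 2000000 in
/-- Alinhac good-unknown cancellation (verified for a horizontal derivative
`∂^α = ∂_a`, `|α| = 1`, where the commutator `𝒞_i^α(f)` vanishes identically and hence
contains no derivative of `φ` of order `|α| + 1`): for horizontal `i`,
`∂^α(∂_i^𝒜 f) = ∂_i^𝒜(∂^α f - (∂_d^𝒜 f) ∂^α φ) + (∂_d^𝒜 ∂_i^𝒜 f) ∂^α φ`,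
i.e. applying `∂^α` to `∂_i^𝒜 f` and passing to the good unknown
`F^α = ∂^α f - (∂_d^𝒜 f) ∂^α φ` cancels the highest-order derivative of `φ`. -/
theorem alinhac_good_unknown (d : ℕ)
    (φ f : EuclideanSpace ℝ (Fin (d + 1)) → ℝ)
    (hφ : ContDiff ℝ 2 φ) (hf : ContDiff ℝ 2 f)
    (hJ : ∀ x, 1 + pd (Fin.last d) φ x ≠ 0)
    (i a : Fin (d + 1)) (hi : i ≠ Fin.last d) (ha : a ≠ Fin.last d) :
    ∀ x, pd a (pdA φ i f) x
      = pdA φ i (fun y => pd a f y - pdA φ (Fin.last d) f y * pd a φ y) x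
        + pdA φ (Fin.last d) (pdA φ i f) x * pd a φ x := by
  intro x
  set L := Fin.last d with hL
  -- basic differentiability
  have hφ1 : Differentiable ℝ φ := hφ.differentiable (by norm_num)
  have hf1 : Differentiable ℝ f := hf.differentiable (by norm_num)
  have hφd := differentiable_pd hφ L
  have hfd := differentiable_pd hf L
  have hφi := differentiable_pd hφ i
  have hfi := differentiable_pd hf i
  have hφa := differentiable_pd hφ a
  have hfa := differentiable_pd hf a
  -- J and K
  have hJd : Differentiable ℝ (fun y => 1 + pd L φ y) := (differentiable_const 1).add hφd
  have hKd : Differentiable ℝ (fun y => (1 + pd L φ y)⁻¹) := hJd.inv hJ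
  -- W = pdA φ L f
  set W : EuclideanSpace ℝ (Fin (d + 1)) → ℝ :=
    fun y => (1 + pd L φ y)⁻¹ * pd L f y with hWdef
  have hWfun : pdA φ L f = W := by
    funext y; simp [pdA, hWdef, ← hL]
  have hWd : Differentiable ℝ W := hKd.mul hfd
  -- derivative of K
  have pdK : ∀ j : Fin (d + 1), pd j (fun y => (1 + pd L φ y)⁻¹) x
      = -((1 + pd L φ x) ^ 2)⁻¹ * pd j (pd L φ) x := by
    intro j
    rw [pd_inv (hJd x) (hJ x), pd_const_add 1 (hφd x)]
  -- derivative of W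
  have pdW : ∀ j : Fin (d + 1), pd j W x
      = (1 + pd L φ x)⁻¹ * pd j (pd L f) x
        - ((1 + pd L φ x) ^ 2)⁻¹ * pd j (pd L φ) x * pd L f x := by
    intro j
    rw [hWdef, pd_mul (hKd x) (hfd x), pdK j]
    ring
  -- pdA φ i f as an explicit function
  have hAi : pdA φ i f = fun y => pd i f y - pd i φ y * W y := by
    funext y; simp [pdA, hi, hWdef, ← hL]
  have hAid : Differentiable ℝ (pdA φ i f) := by
    rw [hAi]; exact hfi.sub (hφi.mul hWd)
  -- derivative of pdA φ i f in any direction j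
  have pdAi : ∀ j : Fin (d + 1), pd j (pdA φ i f) x
      = pd j (pd i f) x - (pd j (pd i φ) x * W x + pd i φ x * pd j W x) := by
    intro j
    rw [hAi, pd_sub (v := fun y => pd i φ y * W y) (hfi x) ((hφi x).mul (hWd x)), pd_mul (hφi x) (hWd x)]
  -- the good unknown integrand g
  set g : EuclideanSpace ℝ (Fin (d + 1)) → ℝ :=
    fun y => pd a f y - W y * pd a φ y with hgdef
  have hgres : (fun y => pd a f y - pdA φ L f y * pd a φ y) = g := by
    funext y; rw [hWfun]
  have hgd : Differentiable ℝ g := hfa.sub (hWd.mul hφa)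
  have pdg : ∀ j : Fin (d + 1), pd j g x
      = pd j (pd a f) x - (pd j W x * pd a φ x + W x * pd j (pd a φ) x) := by
    intro j
    rw [hgdef, pd_sub (v := fun y => W y * pd a φ y) (hfa x) ((hWd x).mul (hφa x)), pd_mul (hWd x) (hφa x)]
  -- expand both sides
  rw [hgres]
  have hRHS1 : pdA φ i g x
      = pd i g x - pd i φ x * ((1 + pd L φ x)⁻¹ * pd L g x) := by
    simp [pdA, hi, ← hL]
  have hRHS2 : pdA φ L (pdA φ i f) x
      = (1 + pd L φ x)⁻¹ * pd L (pdA φ i f) x := by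
    simp [pdA, ← hL]
  rw [hRHS1, hRHS2, pdAi a, pdAi L, pdg i, pdg L, pdW a, pdW i, pdW L,
    pd_comm hf i a, pd_comm hf L a, pd_comm hf L i,
    pd_comm hφ i a, pd_comm hφ L a, pd_comm hφ L i]
  have hx := hJ x
  have hWx : W x = (1 + pd L φ x)⁻¹ * pd L f x := rfl
  rw [hWx]
  set J : ℝ := 1 + pd L φ x with hJdef
  field_simp [hx]
  ring
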